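/- Let A be a neighborhood of 0 in R^n and h : A → R^{n×m} a C^1 function with h(0) = 0 such that rank(h(x)) ≤ 1 for all x in A. Then for every v in R^n, the n×m matrix whose ℓ-th column is Dh_ℓ(0)·v (where h_ℓ is the ℓ-th column of h) has rank at most one. -/

import Mathlib

attribute [local instance] Matrix.normedAddCommGroup Matrix.normedSpace

open Filter Topology

/-- A matrix has rank at most one iff all its 2×2 minors vanish. -/
lemma rank_le_one_iff_minors {n m : ℕ} (M : Matrix (Fin n) (Fin m) ℝ) :
    M.rank ≤ 1 ↔ ∀ i j k l, M i k * M j l = M i l * M j k := by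
  constructor
  · intro hr i j k l
    rw [Matrix.rank_eq_finrank_span_cols] at hr
    set W := Submodule.span ℝ (Set.range M.transpose) with hW
    obtain ⟨c, hc⟩ := finrank_le_one_iff.mp hr
    have col_mem : ∀ ℓ : Fin m, M.transpose ℓ ∈ W := fun ℓ =>
      Submodule.subset_span (Set.mem_range_self ℓ)
    obtain ⟨ak, hak⟩ := hc ⟨M.transpose k, col_mem k⟩
    obtain ⟨al, hal⟩ := hc ⟨M.transpose l, col_mem l⟩
    have hak' : ∀ i', ak * (c : Fin n → ℝ) i' = M i' k := fun i' =>
      congrFun (congrArg Subtype.val hak) i'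
    have hal' : ∀ i', al * (c : Fin n → ℝ) i' = M i' l := fun i' =>
      congrFun (congrArg Subtype.val hal) i'
    rw [← hak' i, ← hal' j, ← hal' i, ← hak' j]; ring
  · intro hm
    by_cases h0 : M = 0
    · simp [h0]
    · have hex : ∃ i ℓ, M i ℓ ≠ 0 := by
        by_contra hc; push_neg at hc
        exact h0 (by ext i ℓ; simpa using hc i ℓ)
      obtain ⟨i₀, ℓ₀, hne⟩ := hex
      rw [Matrix.rank_eq_finrank_span_cols]
      have hle : Submodule.span ℝ (Set.range M.transpose) ≤ Submodule.span ℝ {M.transpose ℓ₀} := by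
        rw [Submodule.span_le]
        rintro _ ⟨ℓ, rfl⟩
        rw [SetLike.mem_coe, Submodule.mem_span_singleton]
        refine ⟨M i₀ ℓ / M i₀ ℓ₀, funext fun i => ?_⟩
        have h1 := hm i i₀ ℓ ℓ₀
        show M i₀ ℓ / M i₀ ℓ₀ * M.transpose ℓ₀ i = M.transpose ℓ i
        field_simp [Matrix.transpose_apply]
        simp only [Matrix.transpose_apply]
        linarith [h1]
      calc Module.finrank ℝ (Submodule.span ℝ (Set.range M.transpose))
          ≤ Module.finrank ℝ (Submodule.span ℝ {M.transpose ℓ₀}) := Submodule.finrank_mono hle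
        _ ≤ 1 := by
            rw [finrank_span_singleton (fun hz => hne (by simpa using congrFun hz i₀))]

/-- Directional derivatives of rank one: if `h` is `C¹` near `0`, `h 0 = 0` and
`rank (h x) ≤ 1` on a neighborhood of `0`, then for every `v` the matrix whose
`ℓ`-th column is `Dh_ℓ(0) v` has rank at most one. -/
theorem directional_derivatives_rank_one {n m : ℕ} (U : Set (Fin n → ℝ))
    (hU : IsOpen U) (hU0 : (0 : Fin n → ℝ) ∈ U)
    (h : (Fin n → ℝ) → Matrix (Fin n) (Fin m) ℝ)
    (hC1 : ContDiffOn ℝ 1 h U) (h0 : h 0 = 0)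
    (hrank : ∀ x ∈ U, (h x).rank ≤ 1) :
    ∀ v : Fin n → ℝ,
      (Matrix.of fun (i : Fin n) (ℓ : Fin m) =>
        fderiv ℝ (fun x => h x i ℓ) 0 v).rank ≤ 1 := by
  intro v
  rw [rank_le_one_iff_minors]
  intro i j k l
  simp only [Matrix.of_apply]
  -- each entry function is differentiable at 0
  have hdiff : DifferentiableAt ℝ h 0 :=
    (hC1.differentiableOn one_ne_zero).differentiableAt (hU.mem_nhds hU0)
  -- entry evaluation as a continuous linear map
  have hentry : ∀ (i : Fin n) (ℓ : Fin m),
      HasFDerivAt (fun x => h x i ℓ)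
        (((ContinuousLinearMap.proj ℓ).comp
          (ContinuousLinearMap.proj i : Matrix (Fin n) (Fin m) ℝ →L[ℝ] (Fin m → ℝ))).comp
          (fderiv ℝ h 0)) 0 := by
    intro i ℓ
    exact (((ContinuousLinearMap.proj (R := ℝ) (φ := fun _ : Fin m => ℝ) ℓ).comp
      (ContinuousLinearMap.proj i : Matrix (Fin n) (Fin m) ℝ →L[ℝ] (Fin m → ℝ))).hasFDerivAt).comp
      0 hdiff.hasFDerivAt
  -- the derivative of t ↦ h (t • v) i ℓ at 0
  have hline : HasDerivAt (fun t : ℝ => t • v) v 0 := by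
    simpa using (hasDerivAt_id (0 : ℝ)).smul_const v
  have hg : ∀ (i : Fin n) (ℓ : Fin m),
      HasDerivAt (fun t : ℝ => h (t • v) i ℓ)
        (fderiv ℝ (fun x => h x i ℓ) 0 v) 0 := by
    intro i ℓ
    have h1 := (hentry i ℓ)
    have h2 : HasFDerivAt (fun x => h x i ℓ)
        (((ContinuousLinearMap.proj ℓ).comp
          (ContinuousLinearMap.proj i : Matrix (Fin n) (Fin m) ℝ →L[ℝ] (Fin m → ℝ))).comp
          (fderiv ℝ h 0)) ((0 : ℝ) • v) := by simpa using h1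
    have h3 := h2.comp_hasDerivAt 0 hline
    rw [h1.fderiv]
    exact h3
  -- slopes tend to the derivative values
  have hslope : ∀ (i : Fin n) (ℓ : Fin m),
      Tendsto (slope (fun t : ℝ => h (t • v) i ℓ) 0) (𝓝[≠] (0 : ℝ))
        (𝓝 (fderiv ℝ (fun x => h x i ℓ) 0 v)) :=
    fun i ℓ => hasDerivAt_iff_tendsto_slope.mp (hg i ℓ)
  -- eventually the minors of h (t • v) vanish
  have hmem : ∀ᶠ t : ℝ in 𝓝[≠] (0 : ℝ), t • v ∈ U := by
    have hcont : Continuous (fun t : ℝ => t • v) := by fun_prop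
    have : ∀ᶠ t : ℝ in 𝓝 (0 : ℝ), t • v ∈ U := by
      have := hcont.continuousAt (x := (0 : ℝ)) (hU.mem_nhds (by simpa using hU0))
      exact this
    exact nhdsWithin_le_nhds this
  have heq : ∀ᶠ t : ℝ in 𝓝[≠] (0 : ℝ),
      slope (fun t : ℝ => h (t • v) i k) 0 t * slope (fun t : ℝ => h (t • v) j l) 0 t =
      slope (fun t : ℝ => h (t • v) i l) 0 t * slope (fun t : ℝ => h (t • v) j k) 0 t := by
    filter_upwards [hmem, self_mem_nhdsWithin] with t ht ht'
    have hm := (rank_le_one_iff_minors (h (t • v))).mp (hrank _ ht) i j k l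
    simp only [slope_def_field, div_sub_div_same, sub_zero]
    have h00 : ∀ (i : Fin n) (ℓ : Fin m), h ((0 : ℝ) • v) i ℓ = 0 := by
      intro i ℓ; simp [h0]
    rw [h00 i k, h00 j l, h00 i l, h00 j k, sub_zero, sub_zero, sub_zero, sub_zero,
      div_mul_div_comm, div_mul_div_comm, hm]
  have T1 := (hslope i k).mul (hslope j l)
  have T2 := (hslope i l).mul (hslope j k)
  exact tendsto_nhds_unique (T1.congr' heq) T2
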